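/- With R and σ₁, σ₂, σ₃ as in the Laurent polynomial example, for any i, j, k with {i,j,k} = {1,2,3}, the element σ_i(t_j)σ_k(t_j) − σ_i(σ_k(t_j))·t_j equals 2 α_{ij} α_{kj} t_j², in particular it is a unit of R (so the second consistency relation fails with an invertible discrepancy). -/
import Mathlib


noncomputable section

/-- The Laurent polynomial algebra `ℂ[α₁₂^{±1}, α₂₃^{±1}, α₁₃^{±1}, t₁^{±1}, t₂^{±1}, t₃^{±1}]`
realized as the group algebra of `ℤ⁶` over `ℂ`. -/
abbrev LR : Type := AddMonoidAlgebra ℂ (Fin 6 → ℤ)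

/-- The group of monomial units of `LR`. -/
def genLR : Multiplicative (Fin 6 → ℤ) →* LRˣ :=
  (AddMonoidAlgebra.of ℂ (Fin 6 → ℤ)).toHomUnits

/-- index of the variable `α_{ij}` (for `i < j`): `α₀₁ ↦ 0`, `α₀₂ ↦ 1`, `α₁₂ ↦ 2`. -/
def pairIdx (i j : Fin 3) : Fin 6 :=
  ⟨i.val + j.val - 1, by have := i.isLt; have := j.isLt; omega⟩

/-- exponent vector of `α_{ij}`, with `α_{ji} = α_{ij}⁻¹` and `α_{ii} = 1`. -/
def aexp (i j : Fin 3) : Fin 6 → ℤ :=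
  if i = j then 0
  else if i < j then Pi.single (pairIdx i j) 1
  else -(Pi.single (pairIdx j i) 1)

/-- the unit `α_{ij} ∈ LRˣ`. -/
def αU (i j : Fin 3) : LRˣ := genLR (Multiplicative.ofAdd (aexp i j))

/-- the unit `t_j ∈ LRˣ`. -/
def tU (j : Fin 3) : LRˣ :=
  genLR (Multiplicative.ofAdd
    (Pi.single (⟨j.val + 3, by have := j.isLt; omega⟩ : Fin 6) 1))



lemma aexp_swap (j k : Fin 3) (h : j < k) : aexp k j = -(aexp j k) := by
  have hne : k ≠ j := (ne_of_lt h).symm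
  have hne' : j ≠ k := ne_of_lt h
  have hnlt : ¬ k < j := not_lt_of_gt h
  simp [aexp, hne, hne', hnlt, h]

lemma alphaU_swap (j k : Fin 3) (h : j < k) : αU k j = (αU j k)⁻¹ := by
  rw [αU, αU, aexp_swap j k h]
  rw [show Multiplicative.ofAdd (-(aexp j k)) = (Multiplicative.ofAdd (aexp j k))⁻¹ from rfl,
    map_inv]

lemma sigma_neg (σ : Fin 3 → (LR ≃ₐ[ℂ] LR))
    (hα : ∀ i j k : Fin 3, j < k →
      σ i (αU j k : LR) =
        if i ≠ j ∧ i ≠ k then -(αU j k : LR) else (αU j k : LR)) :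
    ∀ i j k : Fin 3, i ≠ j → j ≠ k → i ≠ k →
      σ i (αU k j : LR) = -(αU k j : LR) := by
  intro i j k hij hjk hik
  rcases lt_or_gt_of_ne hjk with h | h
  · -- j < k : αU k j = (αU j k)⁻¹
    have hu : σ i (αU j k : LR) = -(αU j k : LR) := by
      rw [hα i j k h, if_pos ⟨hij, hik⟩]
    have hswap : αU k j = (αU j k)⁻¹ := alphaU_swap j k h
    rw [hswap]
    have hUnit : IsUnit (-(αU j k : LR)) := (αU j k).isUnit.neg
    apply hUnit.mul_right_cancel
    rw [neg_mul_neg, ← hu, ← map_mul]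
    have : ((((αU j k)⁻¹ : LRˣ) : LR)) * ((αU j k : LRˣ) : LR) = 1 := by
      rw [← Units.val_mul, inv_mul_cancel, Units.val_one]
    rw [this, map_one]
  · -- k < j
    have := hα i k j h
    rw [if_pos ⟨hik, hij⟩] at this
    exact this

/-- For `{i,j,k} = {1,2,3}`, in the Laurent polynomial example one has
`σᵢ(tⱼ)σₖ(tⱼ) − σᵢσₖ(tⱼ)·tⱼ = 2 α_{ij} α_{kj} tⱼ²`, which is a unit of `R`. -/
theorem stmt4 (σ : Fin 3 → (LR ≃ₐ[ℂ] LR))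
    (hα : ∀ i j k : Fin 3, j < k →
      σ i (αU j k : LR) =
        if i ≠ j ∧ i ≠ k then -(αU j k : LR) else (αU j k : LR))
    (ht : ∀ i j : Fin 3, σ i (tU j : LR) = (αU i j : LR) * (tU j : LR)) :
    ∀ i j k : Fin 3, i ≠ j → j ≠ k → i ≠ k →
      σ i (tU j : LR) * σ k (tU j : LR) - σ i (σ k (tU j : LR)) * (tU j : LR)
        = 2 * (αU i j : LR) * (αU k j : LR) * (tU j : LR) ^ 2 ∧
      IsUnit (σ i (tU j : LR) * σ k (tU j : LR)
        - σ i (σ k (tU j : LR)) * (tU j : LR)) := by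
  intro i j k hij hjk hik
  have hσkj : σ i (αU k j : LR) = -(αU k j : LR) := sigma_neg σ hα i j k hij hjk hik
  have key : σ i (tU j : LR) * σ k (tU j : LR) - σ i (σ k (tU j : LR)) * (tU j : LR)
      = 2 * (αU i j : LR) * (αU k j : LR) * (tU j : LR) ^ 2 := by
    rw [ht k j, map_mul, hσkj, ht i j]
    ring
  refine ⟨key, ?_⟩
  rw [key]
  have h2 : IsUnit (2 : LR) := by
    have : IsUnit (2 : ℂ) := isUnit_iff_ne_zero.mpr two_ne_zero
    have := this.map (algebraMap ℂ LR)
    rwa [map_ofNat] at this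
  exact ((h2.mul (αU i j).isUnit).mul (αU k j).isUnit).mul ((tU j).isUnit.pow 2)
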